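/- Let ρ₁, ρ₂, ρ₃ be complex numbers with ρ₁ + ρ₂ + ρ₃ = 0. Define ξ = (1/4)(|ρ₁|² + |ρ₂|² + |ρ₃|²) and α = (1/2)|ρ₁² + ρ₂² + ρ₃²|. Then 2ξ² − (1/2)α² = (3/2)·(Im(ρ₁·conj(ρ₂)))²; equivalently, with κ = −(1/2)Im(ρ₁·conj(ρ₂)), the proper scalar of the stress flux satisfies ξ_Q² := 2ξ² − (1/2)α² = 6κ². -/

import Mathlib

/-- The proper scalar of the stress flux: `ξ_Q² = 2ξ² − (1/2)α² = 6κ²` with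
`κ = −(1/2)Im(ρ₁·conj ρ₂)`. -/
theorem proper_stress_flux_scalar (ρ₁ ρ₂ ρ₃ : ℂ) (hsum : ρ₁ + ρ₂ + ρ₃ = 0)
    (ξ α κ : ℝ)
    (hξ : ξ = (1/4) * (‖ρ₁‖ ^ 2 + ‖ρ₂‖ ^ 2 + ‖ρ₃‖ ^ 2))
    (hα : α = (1/2) * ‖ρ₁ ^ 2 + ρ₂ ^ 2 + ρ₃ ^ 2‖)
    (hκ : κ = -(1/2) * (ρ₁ * (starRingEnd ℂ) ρ₂).im) :
    2 * ξ ^ 2 - (1/2) * α ^ 2 = (3/2) * (ρ₁ * (starRingEnd ℂ) ρ₂).im ^ 2 ∧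
    2 * ξ ^ 2 - (1/2) * α ^ 2 = 6 * κ ^ 2 := by
  have h3 : ρ₃ = -(ρ₁ + ρ₂) := by linear_combination hsum
  subst h3
  have hα2 : α ^ 2 = (1/4) * Complex.normSq (ρ₁ ^ 2 + ρ₂ ^ 2 + (-(ρ₁ + ρ₂)) ^ 2) := by
    rw [hα, mul_pow, Complex.sq_norm]; ring
  rw [hξ, hκ]
  simp only [pow_two] at hα2
  simp only [Complex.sq_norm, Complex.normSq_apply, Complex.add_re, Complex.add_im,
    Complex.mul_re, Complex.mul_im, Complex.neg_re, Complex.neg_im,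
    Complex.conj_re, Complex.conj_im] at hα2 ⊢
  constructor <;> linear_combination -(1/2) * hα2
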